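/- Let q ≥ 2, let n and d be positive integers with 0 < w < n, and suppose there exists an (n,d)_q-code of size M, i.e., a subset C ⊆ (ZMod q)^n with |C| = M in which any two distinct elements are at Hamming distance at least d. Then there exists a set D ⊆ (ZMod 2)^n of binary words of length n, each of Hamming weight w, such that any two distinct elements of D are at Hamming distance at least 2·⌊(d+1)/2⌋ and q^n · |D| ≥ M · C(n,w), where C(n,w) is the binomial coefficient; equivalently, A(n, 2·⌊(d+1)/2⌋, w) ≥ ⌈M · C(n,w) / q^n⌉. -/

import Mathlib

open Finset

/-- Two binary words of the same Hamming weight are at even Hamming distance. -/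
lemma even_hammingDist_of_norm_eq {n : ℕ} (x y : Fin n → ZMod 2)
    (h : hammingNorm x = hammingNorm y) : Even (hammingDist x y) := by
  classical
  have key : ∀ a b : ZMod 2, (a ≠ b) ↔ ((a ≠ 0 ∧ ¬ b ≠ 0) ∨ (b ≠ 0 ∧ ¬ a ≠ 0)) := by decide
  set A : Finset (Fin n) := univ.filter (fun i => x i ≠ 0) with hA
  set B : Finset (Fin n) := univ.filter (fun i => y i ≠ 0) with hB
  have hset : (univ.filter fun i => x i ≠ y i) = (A \ B) ∪ (B \ A) := by
    ext i
    simp only [hA, hB, mem_filter, mem_union, mem_sdiff, mem_univ, true_and]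
    exact key (x i) (y i)
  have hdisj : Disjoint (A \ B) (B \ A) := disjoint_sdiff_sdiff
  have hd : hammingDist x y = (A \ B).card + (B \ A).card := by
    show (univ.filter fun i => x i ≠ y i).card = _
    rw [hset, card_union_of_disjoint hdisj]
  have h1 : (A \ B).card + (A ∩ B).card = A.card := card_sdiff_add_card_inter A B
  have h2 : (B \ A).card + (B ∩ A).card = B.card := card_sdiff_add_card_inter B A
  have h3 : (A ∩ B).card = (B ∩ A).card := by rw [inter_comm]
  have hAB : A.card = B.card := h
  refine ⟨(A \ B).card, by omega⟩


/-- Theorem 2.2: if there exists an `(n,d)_q`-code of size `M` and `0 < w < n`,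
then there exists a binary constant-weight code `D ⊆ (ZMod 2)^n` of weight `w`
and minimum distance at least `2⌊(d+1)/2⌋` with `q^n · |D| ≥ M · C(n,w)`,
i.e. `A(n, 2⌊(d+1)/2⌋, w) ≥ ⌈M·C(n,w)/q^n⌉`. -/
theorem stmt_5 (q n d M w : ℕ) (hq : 2 ≤ q) (hn : 0 < n) (hd : 0 < d)
    (hw : 0 < w) (hwn : w < n)
    (C : Set (Fin n → ZMod q)) (hCfin : C.Finite) (hM : C.ncard = M)
    (hC : ∀ x ∈ C, ∀ y ∈ C, x ≠ y → d ≤ hammingDist x y) :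
    ∃ D : Set (Fin n → ZMod 2),
      D.Finite ∧
      (∀ x ∈ D, hammingNorm x = w) ∧
      (∀ x ∈ D, ∀ y ∈ D, x ≠ y → 2 * ((d + 1) / 2) ≤ hammingDist x y) ∧
      M * n.choose w ≤ q ^ n * D.ncard := by
  classical
  haveI : NeZero q := ⟨by omega⟩
  haveI : Fact (1 < q) := ⟨by omega⟩
  set V := Fin n → ZMod q
  let Cf : Finset V := hCfin.toFinset
  have hCfcard : Cf.card = M := by
    rw [← hM, Set.ncard_eq_toFinset_card _ hCfin]
  -- the set of everywhere-nonzero vectors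
  let Λ : Finset V := Fintype.piFinset (fun _ : Fin n => (Finset.univ : Finset (ZMod q)).erase 0)
  have hΛmem : ∀ l : V, l ∈ Λ ↔ ∀ i, l i ≠ 0 := by
    intro l
    rw [Fintype.mem_piFinset]
    simp
  have hΛcard : Λ.card = (q - 1) ^ n := by
    rw [Fintype.card_piFinset]
    simp [Finset.card_erase_of_mem, ZMod.card]
  -- the set of w-subsets
  let SW : Finset (Finset (Fin n)) := Finset.powersetCard w Finset.univ
  have hSWcard : SW.card = n.choose w := by
    simp [SW, Finset.card_powersetCard]
  -- the counting domain and map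
  let A : Finset (Finset (Fin n) × (V × V)) := SW ×ˢ (Λ ×ˢ Cf)
  have hAcard : A.card = n.choose w * ((q - 1) ^ n * M) := by
    simp [A, Finset.card_product, hSWcard, hΛcard, hCfcard]
  let F : Finset (Fin n) × (V × V) → V × V :=
    fun p => (p.2.2 - fun i => if i ∈ p.1 then p.2.1 i else 0, p.2.1)
  let T : Finset (V × V) := Finset.univ ×ˢ Λ
  have hVcard : Fintype.card V = q ^ n := by
    simp [V, ZMod.card]
  have hTcard : T.card = q ^ n * (q - 1) ^ n := by
    simp [T, Finset.card_product, hΛcard, Finset.card_univ, hVcard]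
  have hmapsto : ∀ p ∈ A, F p ∈ T := by
    intro p hp
    simp only [A, Finset.mem_product] at hp
    simp only [T, Finset.mem_product, Finset.mem_univ, true_and, F]
    exact hp.2.1
  have hsum : A.card = ∑ y ∈ T, (A.filter fun p => F p = y).card :=
    Finset.card_eq_sum_card_fiberwise hmapsto
  have hTne : T.Nonempty := by
    refine ⟨(0, fun _ => 1), ?_⟩
    simp only [T, Finset.mem_product, Finset.mem_univ, true_and]
    rw [hΛmem]
    intro i
    exact one_ne_zero
  -- pigeonhole
  obtain ⟨y, hyT, hy⟩ : ∃ y ∈ T, A.card ≤ T.card * (A.filter fun p => F p = y).card := by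
    by_contra hcon
    push_neg at hcon
    have hlt : ∑ y ∈ T, (A.filter fun p => F p = y).card * T.card < ∑ y ∈ T, A.card := by
      apply Finset.sum_lt_sum_of_nonempty hTne
      intro y hyT
      calc (A.filter fun p => F p = y).card * T.card
          = T.card * (A.filter fun p => F p = y).card := by ring
        _ < A.card := hcon y hyT
    rw [Finset.sum_const, ← Finset.sum_mul, ← hsum, smul_eq_mul, mul_comm] at hlt
    exact lt_irrefl _ hlt
  obtain ⟨x, l⟩ := y
  have hlΛ : ∀ i, l i ≠ 0 := by
    simp only [T, Finset.mem_product] at hyT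
    exact (hΛmem l).1 hyT.2
  -- the derived subcode
  let U : Finset V := Cf.filter (fun u =>
    (∀ i, u i ≠ x i → u i - x i = l i) ∧ (univ.filter fun i => u i ≠ x i).card = w)
  have hfibU : (A.filter fun p => F p = (x, l)).card ≤ U.card := by
    apply Finset.card_le_card_of_injOn (fun p => p.2.2)
    · rintro ⟨S, lp, u⟩ hp
      simp only [Finset.mem_coe, Finset.mem_filter, A, Finset.mem_product] at hp
      obtain ⟨⟨hS, _, hu⟩, hF⟩ := hp
      have hl' : lp = l := congrArg Prod.snd hF
      have hx : u - (fun i => if i ∈ S then lp i else 0) = x := congrArg Prod.fst hF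
      have hz : ∀ i, u i - x i = if i ∈ S then l i else 0 := by
        intro i
        have h0 : u i - (if i ∈ S then lp i else 0) = x i := congrFun hx i
        rw [hl'] at h0
        rw [← h0]
        exact (sub_sub_cancel _ _)
      have hne : ∀ i, u i ≠ x i ↔ i ∈ S := by
        intro i
        rw [← sub_ne_zero, hz i]
        by_cases hi : i ∈ S <;> simp [hi, hlΛ i]
      simp only [U, Finset.mem_coe, Finset.mem_filter]
      refine ⟨hu, ?_, ?_⟩
      · intro i hi
        rw [hz i, if_pos ((hne i).1 hi)]
      · have hfe : (univ.filter fun i => u i ≠ x i) = S := by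
          ext i
          simp [hne i]
        rw [hfe]
        exact (Finset.mem_powersetCard.1 hS).2
    · rintro ⟨S, lp, u⟩ hp ⟨S', lp', u'⟩ hp' huu
      simp only [Finset.coe_filter, Set.mem_setOf_eq] at hp hp'
      obtain ⟨hpA, hpF⟩ := hp
      obtain ⟨hp'A, hp'F⟩ := hp'
      have huu' : u = u' := huu
      have hl1 : lp = l := congrArg Prod.snd hpF
      have hl2 : lp' = l := congrArg Prod.snd hp'F
      have hx1 : u - (fun i => if i ∈ S then lp i else 0) = x := congrArg Prod.fst hpF
      have hx2 : u' - (fun i => if i ∈ S' then lp' i else 0) = x := congrArg Prod.fst hp'F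
      have hSeq : S = S' := by
        ext i
        have h1 : u i - (if i ∈ S then lp i else 0) = x i := congrFun hx1 i
        have h2 : u' i - (if i ∈ S' then lp' i else 0) = x i := congrFun hx2 i
        rw [hl1] at h1
        rw [hl2, ← huu'] at h2
        have h3 : (if i ∈ S then l i else 0) = (if i ∈ S' then l i else 0) :=
          sub_right_injective (h1.trans h2.symm)
        by_cases hi : i ∈ S <;> by_cases hi' : i ∈ S' <;> simp_all [hlΛ i]
      simp only [Prod.mk.injEq]
      exact ⟨hSeq, hl1.trans hl2.symm, huu'⟩
  -- the binary code
  let φ : V → (Fin n → ZMod 2) := fun u i => if u i = x i then 0 else 1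
  have hφinj : Set.InjOn φ U := by
    intro u hu u' hu' he
    simp only [U, Finset.coe_filter, Set.mem_setOf_eq] at hu hu'
    funext i
    have hi := congrFun he i
    simp only [φ] at hi
    by_cases h1 : u i = x i <;> by_cases h2 : u' i = x i
    · rw [h1, h2]
    · simp [h1, h2] at hi
    · simp [h1, h2] at hi
    · have e1 := hu.2.1 i h1
      have e2 := hu'.2.1 i h2
      have := e1.trans e2.symm
      exact sub_left_injective this
  let Df : Finset (Fin n → ZMod 2) := U.image φ
  have hDfcard : Df.card = U.card := Finset.card_image_of_injOn hφinj
  have hnorm : ∀ b ∈ Df, hammingNorm b = w := by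
    intro b hb
    obtain ⟨u, hu, rfl⟩ := Finset.mem_image.1 hb
    simp only [U, Finset.mem_filter] at hu
    show (univ.filter fun i => φ u i ≠ 0).card = w
    have : (univ.filter fun i => φ u i ≠ 0) = (univ.filter fun i => u i ≠ x i) := by
      ext i
      by_cases h1 : u i = x i <;> simp [φ, h1]
    rw [this]
    exact hu.2.2
  refine ⟨(↑Df : Set (Fin n → ZMod 2)), Finset.finite_toSet Df, ?_, ?_, ?_⟩
  · intro b hb
    exact hnorm b hb
  · intro b hb b' hb' hne
    obtain ⟨u, hu, rfl⟩ := Finset.mem_image.1 hb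
    obtain ⟨u', hu', rfl⟩ := Finset.mem_image.1 hb'
    have huu' : u ≠ u' := fun h => hne (by rw [h])
    simp only [U, Finset.mem_filter] at hu hu'
    have hdist : d ≤ hammingDist u u' := by
      apply hC u ((hCfin.mem_toFinset).1 hu.1) u' ((hCfin.mem_toFinset).1 hu'.1) huu'
    have hsub : d ≤ hammingDist (φ u) (φ u') := by
      refine le_trans hdist (Finset.card_le_card ?_)
      intro i hi
      simp only [mem_filter, mem_univ, true_and] at hi ⊢
      by_cases h1 : u i = x i <;> by_cases h2 : u' i = x i
      · exact absurd (h1.trans h2.symm) hi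
      · simp [φ, h1, h2]
      · simp [φ, h1, h2]
      · have e1 := hu.2.1 i h1
        have e2 := hu'.2.1 i h2
        exact absurd (sub_left_injective (e1.trans e2.symm)) hi
    have heven : Even (hammingDist (φ u) (φ u')) := by
      apply even_hammingDist_of_norm_eq
      rw [hnorm _ (Finset.mem_coe.1 hb), hnorm _ (Finset.mem_coe.1 hb')]
    obtain ⟨k, hk⟩ := heven
    omega
  · rw [Set.ncard_coe_finset]
    have hfinal : A.card ≤ T.card * Df.card := by
      refine le_trans hy ?_
      exact Nat.mul_le_mul_left _ (by rw [hDfcard]; exact hfibU)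
    rw [hAcard, hTcard] at hfinal
    have hpos : 0 < (q - 1) ^ n := pow_pos (by omega) n
    have key : (q - 1) ^ n * (M * n.choose w) ≤ (q - 1) ^ n * (q ^ n * Df.card) := by
      calc (q - 1) ^ n * (M * n.choose w) = n.choose w * ((q - 1) ^ n * M) := by ring
        _ ≤ q ^ n * (q - 1) ^ n * Df.card := hfinal
        _ = (q - 1) ^ n * (q ^ n * Df.card) := by ring
    exact Nat.le_of_mul_le_mul_left key hpos
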